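/- arXiv:1811.07890 — 3 statements merged into one kernel-verified Lean document; each statement's English description precedes it below -/
import Mathlib

section
/- The set G = G_1 ∪ F_2 is a minimal set of generators of the additive submonoid ⟨F_1 ∪ F_2⟩ of ℕ: the submonoid generated by G equals ⟨F_1 ∪ F_2⟩, and for every x ∈ G, x does not belong to the submonoid generated by G ∖ {x}. -/
/-- `q₀ = 2^s`. -/
def q0 (s : ℕ) : ℕ := 2 ^ s

/-- `q = 2 q₀²`. -/
def qS (s : ℕ) : ℕ := 2 * q0 s ^ 2

/-- `m_{j,k,ℓ} = ⌈(q₀/(q₀−1))·(j + k + ℓ − (k+ℓ)/q)⌉`. -/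
def mval (s j k l : ℕ) : ℤ :=
  ⌈((q0 s : ℚ) / ((q0 s : ℚ) - 1)) *
    ((j : ℚ) + (k : ℚ) + (l : ℚ) - ((k : ℚ) + (l : ℚ)) / (qS s : ℚ))⌉

/-- `F₁ = { hq − (ℓ+2k)q₀ − j : ℓ ∈ {0,1}, k,j ∈ {0,…,q₀−1},
    h ∈ {max{1, m_{j,k,ℓ}},…,2q₀} }`. -/
def F1 (s : ℕ) : Set ℕ :=
  {n | ∃ h j k l : ℕ, l ≤ 1 ∧ k < q0 s ∧ j < q0 s ∧
    max 1 (mval s j k l) ≤ (h : ℤ) ∧ h ≤ 2 * q0 s ∧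
    n = h * qS s - (l + 2 * k) * q0 s - j}

/-- `F₂ = { hq − (2h−2q₀−1)q₀ − (q₀−1) : h ∈ {q₀+1,…,2q₀} }`. -/
def F2 (s : ℕ) : Set ℕ :=
  {n | ∃ h : ℕ, q0 s + 1 ≤ h ∧ h ≤ 2 * q0 s ∧
    n = h * qS s - (2 * h - 2 * q0 s - 1) * q0 s - (q0 s - 1)}

/-- `G₁ = { hq − kq₀ − ⌊(2h−k−2)/2⌋ : h ∈ {1,…,q₀}, k ∈ {0,…,2h−2} }`. -/
def G1 (s : ℕ) : Set ℕ :=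
  {n | ∃ h k : ℕ, 1 ≤ h ∧ h ≤ q0 s ∧ k ≤ 2 * h - 2 ∧
    n = h * qS s - k * q0 s - (2 * h - k - 2) / 2}

lemma q0_ge (s : ℕ) (hs : 1 ≤ s) : 2 ≤ q0 s := by
  have : 2 ^ 1 ≤ 2 ^ s := Nat.pow_le_pow_right (by norm_num) hs
  simpa [q0] using this

lemma mval_gt (s j k l : ℕ) (hs : 1 ≤ s) (hk : k < q0 s) (hl : l ≤ 1)
    (hpos : 1 ≤ j + k + l) : (j : ℤ) + k + l < mval s j k l := by
  have hQ : 2 ≤ q0 s := q0_ge s hs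
  have hQr : (2:ℚ) ≤ (q0 s : ℚ) := by exact_mod_cast hQ
  have hkr : (k:ℚ) + 1 ≤ (q0 s : ℚ) := by exact_mod_cast hk
  have hlr : (l:ℚ) ≤ 1 := by exact_mod_cast hl
  have hposr : (1:ℚ) ≤ (j:ℚ) + k + l := by exact_mod_cast hpos
  have hq : (qS s : ℚ) = 2 * (q0 s : ℚ)^2 := by unfold qS; push_cast; ring
  rw [show ((j:ℤ)+k+l) = ((j+k+l : ℕ) : ℤ) by push_cast; ring]
  refine Int.lt_ceil.mpr ?_
  rw [hq]
  set Q : ℚ := (q0 s : ℚ) with hQdef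
  have h1 : (0:ℚ) < Q - 1 := by linarith
  have h2 : (0:ℚ) < Q := by linarith
  rw [div_mul_eq_mul_div, lt_div_iff₀ h1]
  set e : ℚ := ((k:ℚ)+l) / (2*Q^2) with hedef
  have h3 : Q*e*(2*Q) = (k:ℚ)+l := by rw [hedef]; field_simp
  have h4 : Q*e ≤ 1/2 := by nlinarith [h3, h2, hkr, hlr]
  push_cast
  nlinarith [h4, hposr]

lemma mval_gt2 (s j k l : ℕ) (hs : 1 ≤ s) (hk : k < q0 s) (hl : l ≤ 1)
    (hbig : q0 s ≤ j + k + l) : (j : ℤ) + k + l + 1 < mval s j k l := by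
  have hQ : 2 ≤ q0 s := q0_ge s hs
  have hQr : (2:ℚ) ≤ (q0 s : ℚ) := by exact_mod_cast hQ
  have hkr : (k:ℚ) + 1 ≤ (q0 s : ℚ) := by exact_mod_cast hk
  have hlr : (l:ℚ) ≤ 1 := by exact_mod_cast hl
  have hbigr : (q0 s : ℚ) ≤ (j:ℚ) + k + l := by exact_mod_cast hbig
  have hq : (qS s : ℚ) = 2 * (q0 s : ℚ)^2 := by unfold qS; push_cast; ring
  rw [show ((j:ℤ)+k+l+1) = ((j+k+l+1 : ℕ) : ℤ) by push_cast; ring]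
  refine Int.lt_ceil.mpr ?_
  rw [hq]
  set Q : ℚ := (q0 s : ℚ) with hQdef
  have h1 : (0:ℚ) < Q - 1 := by linarith
  have h2 : (0:ℚ) < Q := by linarith
  rw [div_mul_eq_mul_div, lt_div_iff₀ h1]
  set e : ℚ := ((k:ℚ)+l) / (2*Q^2) with hedef
  have h3 : Q*e*(2*Q) = (k:ℚ)+l := by rw [hedef]; field_simp
  have h4 : Q*e ≤ 1/2 := by nlinarith [h3, h2, hkr, hlr]
  push_cast
  nlinarith [h4, hbigr, hQr]

lemma mval_le (s j k l h : ℕ) (hs : 1 ≤ s) (hsum : j + k + l + 1 = h)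
    (hh : h ≤ q0 s) : mval s j k l ≤ (h:ℤ) := by
  have hQ : 2 ≤ q0 s := q0_ge s hs
  have hQr : (2:ℚ) ≤ (q0 s : ℚ) := by exact_mod_cast hQ
  have hhr : (h:ℚ) ≤ (q0 s : ℚ) := by exact_mod_cast hh
  have hsumr : (j:ℚ) + k + l + 1 = (h:ℚ) := by exact_mod_cast hsum
  have hq : (qS s : ℚ) = 2 * (q0 s : ℚ)^2 := by unfold qS; push_cast; ring
  refine Int.ceil_le.mpr ?_
  rw [hq]
  set Q : ℚ := (q0 s : ℚ) with hQdef
  have h1 : (0:ℚ) < Q - 1 := by linarith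
  have h2 : (0:ℚ) < Q := by linarith
  rw [div_mul_eq_mul_div, div_le_iff₀ h1]
  set e : ℚ := ((k:ℚ)+l) / (2*Q^2) with hedef
  have h3 : 0 ≤ e := by positivity
  have h4 : 0 ≤ Q*e := by positivity
  push_cast
  nlinarith [h4, hhr, hsumr]

lemma Abound' (Q K j : ℕ) (hQ : 2 ≤ Q) (hK : K ≤ 2*Q - 1) (hj : j ≤ Q - 1) :
    K*Q + j + 1 ≤ 2*Q^2 := by
  obtain ⟨P, rfl⟩ : ∃ P, Q = P + 2 := ⟨Q - 2, by omega⟩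
  have h1 : K*(P+2) ≤ (2*P+3)*(P+2) := Nat.mul_le_mul_right _ (by omega)
  have h2 : 2*(P+2)^2 = (2*P+3)*(P+2) + (P+1) + 1 := by ring
  omega

lemma split_one (q h h1 A : ℕ) (h12 : h1 ≤ h) (b1 : A ≤ h1*q) :
    h*q - A = (h - h1)*q + (h1*q - A) := by
  have e1 : (h - h1)*q = h*q - h1*q := Nat.sub_mul _ _ _
  have e3 : h1*q ≤ h*q := Nat.mul_le_mul_right _ h12
  omega

lemma split_two (q h h1 h2 A1 A2 : ℕ) (h12 : h1 + h2 ≤ h) (b1 : A1 ≤ h1*q) (b2 : A2 ≤ h2*q) :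
    h*q - (A1+A2) = (h - h1 - h2)*q + (h1*q - A1) + (h2*q - A2) := by
  have e1 : (h - h1 - h2)*q = h*q - h1*q - h2*q := by rw [Nat.sub_mul, Nat.sub_mul]
  have e3 : h1*q + h2*q ≤ h*q := by
    calc h1*q + h2*q = (h1+h2)*q := (Nat.add_mul _ _ _).symm
    _ ≤ h*q := Nat.mul_le_mul_right _ h12
  omega

lemma q_mem (s : ℕ) (hs : 1 ≤ s) : qS s ∈ G1 s := by
  refine ⟨1, 0, le_refl _, by have := q0_ge s hs; omega, by omega, by simp⟩

lemma mul_q_mem (s : ℕ) (hs : 1 ≤ s) (c : ℕ) :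
    c * qS s ∈ AddSubmonoid.closure (G1 s ∪ F2 s) := by
  have h1 : qS s ∈ AddSubmonoid.closure (G1 s ∪ F2 s) :=
    AddSubmonoid.subset_closure (Set.mem_union_left _ (q_mem s hs))
  simpa [smul_eq_mul] using nsmul_mem h1 c

lemma F1_subset (s : ℕ) (hs : 1 ≤ s) :
    F1 s ⊆ ↑(AddSubmonoid.closure (G1 s ∪ F2 s)) := by
  rintro n ⟨h, j, k, l, hl, hk, hj, hm, hh2, rfl⟩
  have hQ : 2 ≤ q0 s := q0_ge s hs
  set Q := q0 s with hQdef
  set q := qS s with hqdef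
  have hqQ : q = 2*Q^2 := rfl
  have hm1 : (1:ℤ) ≤ (h:ℤ) := le_trans (le_max_left _ _) hm
  have hm2 : mval s j k l ≤ (h:ℤ) := le_trans (le_max_right _ _) hm
  have hh1 : 1 ≤ h := by exact_mod_cast hm1
  rw [Nat.sub_sub]
  by_cases hc1 : j + k + l + 1 ≤ Q
  · -- one generator
    have hhS : j + k + l + 1 ≤ h := by
      rcases Nat.eq_zero_or_pos (j+k+l) with h0 | hp
      · omega
      · have h1 := mval_gt s j k l hs hk hl hp
        have : ((j:ℤ)+k+l+1) ≤ (h:ℤ) := by omega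
        exact_mod_cast this
    have hgmem : ((j+k+l+1)*q - ((2*k+l)*Q + j)) ∈ G1 s := by
      refine ⟨j+k+l+1, 2*k+l, by omega, hc1, by omega, ?_⟩
      have hd : (2*(j+k+l+1) - (2*k+l) - 2)/2 = j := by omega
      rw [hd, Nat.sub_sub]
    have hA : (2*k+l)*Q + j ≤ 1*q := by
      have := Abound' Q (2*k+l) j hQ (by omega) (by omega)
      omega
    have hA2 : (2*k+l)*Q + j ≤ (j+k+l+1)*q :=
      le_trans hA (Nat.mul_le_mul_right _ (by omega))
    have hveq : (l+2*k)*Q + j = (2*k+l)*Q + j := by ring_nf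
    rw [hveq, split_one q h (j+k+l+1) _ hhS hA2]
    exact add_mem (mul_q_mem s hs _) (AddSubmonoid.subset_closure (Or.inl hgmem))
  · by_cases hc2 : j + k + l ≤ 2*Q - 2
    · -- two generators
      obtain ⟨k1, k2, hk12, hb1, hb2⟩ :
          ∃ k1 k2, k1 + k2 = k ∧ j + k1 + 1 ≤ Q ∧ k2 + l + 1 ≤ Q :=
        ⟨min k (Q-1-j), k - min k (Q-1-j), by omega, by omega, by omega⟩
      have hhS : j + k + l + 2 ≤ h := by
        have h1 := mval_gt2 s j k l hs hk hl (by omega)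
        have : ((j:ℤ)+k+l+2) ≤ (h:ℤ) := by omega
        exact_mod_cast this
      have hg1 : ((j+k1+1)*q - (2*k1*Q + j)) ∈ G1 s := by
        refine ⟨j+k1+1, 2*k1, by omega, hb1, by omega, ?_⟩
        have hd : (2*(j+k1+1) - 2*k1 - 2)/2 = j := by omega
        rw [hd, Nat.sub_sub]
      have hg2 : ((k2+l+1)*q - ((2*k2+l)*Q + 0)) ∈ G1 s := by
        refine ⟨k2+l+1, 2*k2+l, by omega, hb2, by omega, ?_⟩
        have hd : (2*(k2+l+1) - (2*k2+l) - 2)/2 = 0 := by omega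
        rw [hd, Nat.sub_sub]
      have hA1 : 2*k1*Q + j ≤ (j+k1+1)*q := by
        have := Abound' Q (2*k1) j hQ (by omega) (by omega)
        have h2 : 1*q ≤ (j+k1+1)*q := Nat.mul_le_mul_right _ (by omega)
        omega
      have hA2 : (2*k2+l)*Q + 0 ≤ (k2+l+1)*q := by
        have := Abound' Q (2*k2+l) 0 hQ (by omega) (by omega)
        have h2 : 1*q ≤ (k2+l+1)*q := Nat.mul_le_mul_right _ (by omega)
        omega
      have hveq : (l+2*k)*Q + j = (2*k1*Q + j) + ((2*k2+l)*Q + 0) := by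
        subst hk12; ring
      rw [hveq, split_two q h (j+k1+1) (k2+l+1) _ _ (by omega) hA1 hA2]
      exact add_mem (add_mem (mul_q_mem s hs _) (AddSubmonoid.subset_closure (Or.inl hg1)))
        (AddSubmonoid.subset_closure (Or.inl hg2))
    · -- mu generator
      have hjkl : j = Q - 1 ∧ k = Q - 1 ∧ l = 1 := by omega
      have hhS : 2*Q ≤ h := by
        have h1 := mval_gt2 s j k l hs hk hl (by omega)
        have hZ : ((j:ℤ)+k+l+2) ≤ (h:ℤ) := by omega
        have : j+k+l+2 ≤ h := by exact_mod_cast hZ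
        omega
      have hgmem : (2*Q*q - ((l+2*k)*Q + j)) ∈ F2 s := by
        refine ⟨2*Q, by omega, by omega, ?_⟩
        have hd : 2*(2*Q) - 2*Q - 1 = l + 2*k := by omega
        have hd2 : Q - 1 = j := by omega
        rw [hd, hd2, Nat.sub_sub]
      have hA : (l+2*k)*Q + j ≤ 2*Q*q := by
        have := Abound' Q (l+2*k) j hQ (by omega) (by omega)
        have h2 : 1*q ≤ 2*Q*q := Nat.mul_le_mul_right _ (by omega)
        omega
      rw [split_one q h (2*Q) _ hhS hA]
      exact add_mem (mul_q_mem s hs _) (AddSubmonoid.subset_closure (Or.inr hgmem))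

lemma G1_subset_F1 (s : ℕ) (hs : 1 ≤ s) : G1 s ⊆ F1 s := by
  rintro n ⟨h, k, hh1, hhQ, hk, rfl⟩
  have hQ : 2 ≤ q0 s := q0_ge s hs
  refine ⟨h, (2*h - k - 2)/2, k/2, k % 2, by omega, by omega, by omega, ?_, by omega, ?_⟩
  · refine max_le (by exact_mod_cast hh1) (mval_le s _ _ _ h hs (by omega) hhQ)
  · have : k % 2 + 2*(k/2) = k := by omega
    rw [this]


lemma gen_param (s : ℕ) (hs : 1 ≤ s) {x : ℕ} (hx : x ∈ G1 s ∪ F2 s) :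
    ∃ h K j l : ℕ, 1 ≤ h ∧ l ≤ 1 ∧ j ≤ q0 s - 1 ∧ K*(q0 s) + j + 1 ≤ qS s ∧
      2*h = K + 2*j + 2 + l ∧ (x:ℤ) = h*(qS s) - K*(q0 s) - j := by
  have hQ : 2 ≤ q0 s := q0_ge s hs
  have hq : qS s = 2*(q0 s)^2 := rfl
  rcases hx with ⟨h, k, hh1, hhQ, hk, rfl⟩ | ⟨h, hh1, hh2, rfl⟩
  · refine ⟨h, k, (2*h - k - 2)/2, (2*h - k - 2) % 2, hh1, by omega, by omega, ?_, by omega, ?_⟩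
    · have := Abound' (q0 s) k ((2*h - k - 2)/2) hQ (by omega) (by omega)
      omega
    · have hb : k*(q0 s) + (2*h - k - 2)/2 + 1 ≤ qS s := by
        have := Abound' (q0 s) k ((2*h - k - 2)/2) hQ (by omega) (by omega)
        omega
      have hb2 : 1*(qS s) ≤ h*(qS s) := Nat.mul_le_mul_right _ hh1
      have : h * qS s - k * q0 s - (2 * h - k - 2) / 2
          = h * qS s - (k * q0 s + (2 * h - k - 2) / 2) := by omega
      rw [this]
      push_cast [Nat.cast_sub (by omega : k * q0 s + (2 * h - k - 2) / 2 ≤ h * qS s)]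
      ring
  · refine ⟨h, 2*h - 2*(q0 s) - 1, q0 s - 1, 1, by omega, le_refl _, by omega, ?_, by omega, ?_⟩
    · have := Abound' (q0 s) (2*h - 2*(q0 s) - 1) (q0 s - 1) hQ (by omega) (by omega)
      omega
    · have hb : (2*h - 2*(q0 s) - 1)*(q0 s) + (q0 s - 1) + 1 ≤ qS s := by
        have := Abound' (q0 s) (2*h - 2*(q0 s) - 1) (q0 s - 1) hQ (by omega) (by omega)
        omega
      have hb2 : 1*(qS s) ≤ h*(qS s) := Nat.mul_le_mul_right _ (by omega)
      have : h * qS s - (2 * h - 2 * q0 s - 1) * q0 s - (q0 s - 1)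
          = h * qS s - ((2 * h - 2 * q0 s - 1) * q0 s + (q0 s - 1)) := by omega
      rw [this]
      push_cast [Nat.cast_sub (by omega : (2 * h - 2 * q0 s - 1) * q0 s + (q0 s - 1) ≤ h * qS s)]
      ring

/-- Aggregate parametrization for a list of generators. -/
lemma sum_param (s : ℕ) (hs : 1 ≤ s) (L : List ℕ) (hL : ∀ y ∈ L, y ∈ G1 s ∪ F2 s) :
    ∃ H KT JT LT : ℕ, ((L.sum : ℤ) = H*(qS s) - KT*(q0 s) - JT) ∧
      2*H = KT + 2*JT + 2*L.length + LT := by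
  induction L with
  | nil => exact ⟨0, 0, 0, 0, by simp, by simp⟩
  | cons y L ih =>
    obtain ⟨H, KT, JT, LT, e1, e2⟩ := ih (fun z hz => hL z (List.mem_cons_of_mem y hz))
    obtain ⟨h, K, j, l, _, _, _, _, e5, e6⟩ := gen_param s hs (hL y (List.mem_cons_self))
    refine ⟨h + H, K + KT, j + JT, l + LT, ?_, by simp [List.length_cons]; omega⟩
    push_cast [List.sum_cons]
    push_cast at e1 e6
    rw [e1, e6]; ring

lemma minimal_gen (s : ℕ) (hs : 1 ≤ s) :
    ∀ x ∈ G1 s ∪ F2 s, x ∉ AddSubmonoid.closure ((G1 s ∪ F2 s) \ {x}) := by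
  intro x hx hmem
  obtain ⟨L, hLmem, hLsum⟩ := AddSubmonoid.exists_list_of_mem_closure hmem
  have hLG : ∀ y ∈ L, y ∈ G1 s ∪ F2 s := fun y hy => (hLmem y hy).1
  obtain ⟨h, K, j, l, hh1, hl, hj, hb, hid, hval⟩ := gen_param s hs hx
  obtain ⟨H, KT, JT, LT, e1, e2⟩ := sum_param s hs L hLG
  have hQ : 2 ≤ q0 s := q0_ge s hs
  have hQ' : (2:ℤ) ≤ (q0 s : ℤ) := by exact_mod_cast hQ
  have hbZ' : (K:ℤ)*(q0 s) + j + 1 ≤ (qS s : ℤ) := by exact_mod_cast hb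
  have hjZ' : (j:ℤ) ≤ (q0 s : ℤ) - 1 := by
    have h1 : ((j:ℕ):ℤ) ≤ ((q0 s - 1 : ℕ):ℤ) := by exact_mod_cast hj
    have h2 : ((q0 s - 1 : ℕ):ℤ) = (q0 s : ℤ) - 1 := by
      have := Nat.cast_sub (by omega : 1 ≤ q0 s) (R := ℤ)
      simpa using this
    omega
  set Q' : ℤ := (q0 s : ℤ) with hQdef
  have hq'2 : (qS s : ℤ) = 2*Q'^2 := by rw [hQdef]; push_cast [qS]; ring
  set q' : ℤ := (qS s : ℤ) with hqdef
  have hq'pos : (0:ℤ) < q' := by rw [hq'2]; positivity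
  have hbZ : (K:ℤ)*Q' + j + 1 ≤ q' := hbZ'
  have hjZ : (j:ℤ) ≤ Q' - 1 := hjZ'
  -- length ≤ 1
  have hlen : L.length ≤ 1 := by
    by_contra hcon
    push_neg at hcon
    have hsumZ : (h:ℤ)*q' - K*Q' - j = (H:ℤ)*q' - KT*Q' - JT := by
      rw [← hval, ← e1, hLsum]
    set c : ℤ := (H:ℤ) - h with hcdef
    have hc : c * q' = ((KT:ℤ) - K)*Q' + ((JT:ℤ) - j) := by
      rw [hcdef]; linear_combination -hsumZ
    have hc0 : 0 ≤ c := by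
      by_contra hneg
      push_neg at hneg
      have h1 : c * q' ≤ (-1) * q' := mul_le_mul_of_nonneg_right (by omega) (le_of_lt hq'pos)
      have h2 : (0:ℤ) ≤ (KT:ℤ)*Q' + JT := by positivity
      nlinarith
    set a : ℤ := 2*c*Q' - KT + K with hadef
    have ha : (JT:ℤ) - j = a * Q' := by
      rw [hadef]; linear_combination (-1) * hc + c * hq'2
    have ha0 : 0 ≤ a := by
      by_contra hneg
      push_neg at hneg
      have h1 : a * Q' ≤ (-1) * Q' := mul_le_mul_of_nonneg_right (by omega) (by linarith)
      have h2 : (0:ℤ) ≤ (JT:ℤ) := by positivity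
      linarith
    have e2Z : 2*(H:ℤ) = KT + 2*JT + 2*(L.length:ℤ) + LT := by exact_mod_cast e2
    have hidZ : 2*(h:ℤ) = K + 2*j + 2 + l := by exact_mod_cast hid
    have hzero : 2*(c*Q') - 2*c + 2*(a*Q') - a + 2*((L.length:ℤ) - 1) + LT - l = 0 := by
      have hKT : (KT:ℤ) - K = 2*(c*Q') - a := by rw [hadef]; ring
      linarith [e2Z, hidZ, ha, hKT, hcdef]
    have hp1 : 0 ≤ c*(Q' - 1) := mul_nonneg hc0 (by linarith)
    have hp2 : 0 ≤ a*(2*Q' - 1) := mul_nonneg ha0 (by linarith)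
    have hlZ : (l:ℤ) ≤ 1 := by exact_mod_cast hl
    have hLTZ : (0:ℤ) ≤ LT := by positivity
    have htZ : (2:ℤ) ≤ (L.length:ℤ) := by exact_mod_cast hcon
    linarith [hzero, hp1, hp2, hlZ, hLTZ, htZ]
  -- now L has length 0 or 1
  rcases Nat.le_one_iff_eq_zero_or_eq_one.mp hlen with hL | hL
  · -- empty: x = 0 impossible
    have h0 : L = [] := List.length_eq_zero_iff.mp hL
    have hx0 : (x:ℤ) = 0 := by rw [← hLsum, h0]; simp
    have hq1 : (1:ℤ)*q' ≤ (h:ℤ)*q' :=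
      mul_le_mul_of_nonneg_right (by exact_mod_cast hh1) (le_of_lt hq'pos)
    rw [hval] at hx0
    linarith
  · -- singleton: y = x but y ≠ x
    obtain ⟨y, hy⟩ := List.length_eq_one_iff.mp hL
    have : y = x := by rw [hy] at hLsum; simpa using hLsum
    have hne : y ∉ ({x} : Set ℕ) := (hLmem y (by simp [hy])).2
    exact hne (by simp [this])

/-- `G = G₁ ∪ F₂` is a minimal set of generators of `⟨F₁ ∪ F₂⟩`. -/
theorem stmt15 (s : ℕ) (hs : 1 ≤ s) :
    AddSubmonoid.closure (G1 s ∪ F2 s) = AddSubmonoid.closure (F1 s ∪ F2 s) ∧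
    ∀ x ∈ G1 s ∪ F2 s, x ∉ AddSubmonoid.closure ((G1 s ∪ F2 s) \ {x}) := by
  constructor
  · apply le_antisymm
    · exact AddSubmonoid.closure_mono (Set.union_subset_union_left (F2 s) (G1_subset_F1 s hs))
    · rw [AddSubmonoid.closure_le]
      rintro x (hx | hx)
      · exact F1_subset s hs hx
      · exact AddSubmonoid.subset_closure (Or.inr hx)
  · exact minimal_gen s hs
end

section
/- For every parameter tuple (h,j,k,ℓ) with ℓ ∈ {0,1}, k ∈ {0,…,q_0−1}, j ∈ {0,…,q_0−1}, and max{1, m_{j,k,ℓ}} ≤ h ≤ 2q_0, there exists a nonnegative integer i such that all four of the following hold: (1) iq + ℓ + k − 2hq_0 ≥ 0; (2) 2iq_0 + jq − h ≥ 0; (3) (h−ℓ−k−i−j)(q+q_0) + (h−j−k−i)(q_0+1) ≥ 0; (4) hq − (ℓ+2k)q_0 − j > 0. -/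
set_option maxHeartbeats 1600000 in
/-- For every admissible `(h,j,k,ℓ)` there is a nonnegative integer `i`
satisfying the system of inequalities (10) of the paper. -/
theorem stmt16 (s : ℕ) (hs : 1 ≤ s) (h j k l : ℕ)
    (hl : l ≤ 1) (hk : k < q0 s) (hj : j < q0 s)
    (hhm : max 1 (mval s j k l) ≤ (h : ℤ)) (hh : h ≤ 2 * q0 s) :
    ∃ i : ℕ,
      (i : ℤ) * qS s + l + k - 2 * h * q0 s ≥ 0 ∧
      2 * (i : ℤ) * q0 s + (j : ℤ) * qS s - h ≥ 0 ∧
      ((h : ℤ) - l - k - i - j) * (qS s + q0 s)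
        + ((h : ℤ) - j - k - i) * (q0 s + 1) ≥ 0 ∧
      (h : ℤ) * qS s - ((l : ℤ) + 2 * k) * q0 s - j > 0 := by
  have hQ2 : (2:ℤ) ≤ (q0 s : ℤ) := by
    have h2n : 2 ≤ q0 s := by
      have : 2 ^ 1 ≤ 2 ^ s := Nat.pow_le_pow_right (by norm_num) hs
      simpa [q0] using this
    exact_mod_cast h2n
  have hqS : (qS s : ℤ) = 2 * (q0 s : ℤ) ^ 2 := by unfold qS; push_cast; ring
  have h1 : 1 ≤ (h : ℤ) := le_trans (le_max_left _ _) hhm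
  have hh' : (h : ℤ) ≤ 2 * (q0 s : ℤ) := by exact_mod_cast hh
  have hk' : (k : ℤ) < (q0 s : ℤ) := by exact_mod_cast hk
  have hj' : (j : ℤ) < (q0 s : ℤ) := by exact_mod_cast hj
  have hl' : (l : ℤ) ≤ 1 := by exact_mod_cast hl
  have hk0 : (0:ℤ) ≤ k := Int.natCast_nonneg k
  have hj0 : (0:ℤ) ≤ j := Int.natCast_nonneg j
  have hl0 : (0:ℤ) ≤ l := Int.natCast_nonneg l
  -- derive A from hhm
  have hm : mval s j k l ≤ (h : ℤ) := le_trans (le_max_right _ _) hhm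
  have hQQ1 : (1:ℚ) < (q0 s : ℚ) := by exact_mod_cast lt_of_lt_of_le one_lt_two hQ2
  have hqQ : (0:ℚ) < (qS s : ℚ) := by
    have : 0 < qS s := by
      have : (0:ℤ) < (qS s : ℤ) := by rw [hqS]; positivity
      exact_mod_cast this
    exact_mod_cast this
  have hx : ((q0 s : ℚ) / ((q0 s : ℚ) - 1)) *
      ((j : ℚ) + (k : ℚ) + (l : ℚ) - ((k : ℚ) + (l : ℚ)) / (qS s : ℚ)) ≤ (h : ℚ) := by
    have h4 : ((mval s j k l : ℤ) : ℚ) ≤ (h:ℚ) := by exact_mod_cast hm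
    simp only [mval] at h4
    exact le_trans (Int.le_ceil _) h4
  have AQ : (q0 s : ℚ) * ((qS s : ℚ) * ((j:ℚ)+(k:ℚ)+(l:ℚ)) - ((k:ℚ)+(l:ℚ)))
      ≤ (h:ℚ) * ((q0 s : ℚ) - 1) * (qS s : ℚ) := by
    have hpos : (0:ℚ) < (q0 s : ℚ) - 1 := by linarith
    rw [div_mul_eq_mul_div, div_le_iff₀ hpos] at hx
    have h3 : ((k:ℚ)+(l:ℚ)) / (qS s : ℚ) * (qS s : ℚ) = (k:ℚ)+(l:ℚ) :=
      div_mul_cancel₀ _ (ne_of_gt hqQ)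
    nlinarith [mul_le_mul_of_nonneg_right hx (le_of_lt hqQ)]
  have A : (q0 s : ℤ) * ((qS s : ℤ) * ((j:ℤ)+k+l) - ((k:ℤ)+l))
      ≤ (h:ℤ) * ((q0 s : ℤ) - 1) * (qS s : ℤ) := by exact_mod_cast AQ
  rw [hqS] at A ⊢
  -- now pure integer arithmetic; generalize Q
  set Q : ℤ := (q0 s : ℤ) with hQdef
  clear_value Q
  clear hx AQ hm hhm hQQ1 hqQ hl hk hj hh hqS
  -- step B : h*(Q-1) ≥ Q*(j+k+l)
  have hB : Q * ((j:ℤ)+k+l) ≤ (h:ℤ) * (Q - 1) := by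
    have hQ0 : (0:ℤ) < 2*Q^2 := by positivity
    have key : (-1 : ℤ) < (h:ℤ) * (Q - 1) - Q * ((j:ℤ)+k+l) := by
      have h2 : ((h:ℤ) * (Q - 1) - Q * ((j:ℤ)+k+l)) * (2*Q^2) > (-1) * (2*Q^2) := by
        nlinarith [A]
      exact lt_of_mul_lt_mul_right (by linarith) (le_of_lt hQ0)
    linarith
  -- step: if j+k+l ≥ 1 then h ≥ j+k+l+1
  have hS : (j:ℤ)+k+l = 0 ∨ (h:ℤ) ≥ (j:ℤ)+k+l+1 := by
    rcases eq_or_lt_of_le (by positivity : (0:ℤ) ≤ (j:ℤ)+k+l) with h0 | h0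
    · exact Or.inl h0.symm
    · right
      by_contra hc
      push_neg at hc
      nlinarith [hB]
  have goal4 : (h : ℤ) * (2*Q^2) - ((l : ℤ) + 2 * k) * Q - j > 0 := by
    nlinarith [mul_le_mul_of_nonneg_right hl' (by linarith : (0:ℤ) ≤ Q),
      mul_le_mul_of_nonneg_right (by linarith : (k:ℤ) ≤ Q - 1) (by linarith : (0:ℤ) ≤ Q)]
  by_cases hcase : 2 * (h:ℤ) * Q - l - k ≤ 2*Q^2
  · have g2 : (0:ℤ) ≤ (j:ℤ) * (2*Q^2) := by positivity
    refine ⟨1, by push_cast; linarith, by push_cast; linarith, ?_, goal4⟩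
    push_cast
    have key : (0:ℤ) ≤ (h:ℤ) - ((j:ℤ)+k+l) - 1 := by
      rcases hS with h0 | h0
      · have : (j:ℤ) = 0 ∧ (k:ℤ) = 0 ∧ (l:ℤ) = 0 := by omega
        omega
      · linarith
    have hD : ((h:ℤ) - l - k - 1 - j) * (2*Q^2+Q) + ((h:ℤ) - j - k - 1)*(Q+1)
        = ((h:ℤ)-((j:ℤ)+k+l)-1)*(2*Q^2+2*Q+1) + l*(Q+1) := by ring
    rw [hD]
    have t1 : (0:ℤ) ≤ ((h:ℤ)-((j:ℤ)+k+l)-1)*(2*Q^2+2*Q+1) :=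
      mul_nonneg key (by positivity)
    have t2 : (0:ℤ) ≤ (l:ℤ)*(Q+1) := mul_nonneg hl0 (by linarith)
    linarith
  · push_neg at hcase
    have hhQ : (h:ℤ) ≥ Q + 1 := by
      have h2 : 2*Q*((h:ℤ) - Q) > 0 := by nlinarith
      have h3 : (h:ℤ) - Q > 0 :=
        lt_of_mul_lt_mul_left (by linarith) (by linarith : (0:ℤ) ≤ 2*Q)
      linarith
    have g1 : 2*(h:ℤ)*Q ≤ 4*Q^2 := by nlinarith [mul_le_mul_of_nonneg_right hh' (by linarith : (0:ℤ) ≤ Q)]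
    have g2 : (0:ℤ) ≤ (j:ℤ) * (2*Q^2) := by positivity
    refine ⟨2, by push_cast; linarith, by push_cast; linarith, ?_, goal4⟩
    push_cast
    have key : (0:ℤ) ≤ (h:ℤ) - ((j:ℤ)+k+l) - 2 := by
      rcases hS with h0 | h0
      · have : (j:ℤ) = 0 ∧ (k:ℤ) = 0 ∧ (l:ℤ) = 0 := by omega
        omega
      · rcases eq_or_lt_of_le h0 with he | he
        · exfalso
          have hSQ : (j:ℤ)+k+l ≤ Q - 1 := by nlinarith [hB, he]
          linarith
        · linarith
    have hD : ((h:ℤ) - l - k - 2 - j) * (2*Q^2+Q) + ((h:ℤ) - j - k - 2)*(Q+1)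
        = ((h:ℤ)-((j:ℤ)+k+l)-2)*(2*Q^2+2*Q+1) + l*(Q+1) := by ring
    rw [hD]
    have t1 : (0:ℤ) ≤ ((h:ℤ)-((j:ℤ)+k+l)-2)*(2*Q^2+2*Q+1) :=
      mul_nonneg key (by positivity)
    have t2 : (0:ℤ) ≤ (l:ℤ)*(Q+1) := mul_nonneg hl0 (by linarith)
    linarith
end

section
/- Let ℓ ∈ {0,1}, k ∈ {0,…,q_0−1}, j ∈ {0,…,q_0−1} with j ≥ q_0 − (k+ℓ). Then j + k + ℓ + 2 ≤ m_{j,k,ℓ} ≤ j + k + ℓ + 3, and if moreover j + k + ℓ ≤ 2q_0 − 2 then m_{j,k,ℓ} = j + k + ℓ + 2. -/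
/-- If `j ≥ q₀ − (k+ℓ)`, then `j+k+ℓ+2 ≤ m_{j,k,ℓ} ≤ j+k+ℓ+3`, and if moreover
`j+k+ℓ ≤ 2q₀−2` then `m_{j,k,ℓ} = j+k+ℓ+2`. -/
theorem stmt19 (s : ℕ) (hs : 1 ≤ s) (j k l : ℕ)
    (hl : l ≤ 1) (hk : k < q0 s) (hj : j < q0 s)
    (h₁ : q0 s ≤ j + k + l) :
    ((j : ℤ) + k + l + 2 ≤ mval s j k l ∧ mval s j k l ≤ (j : ℤ) + k + l + 3) ∧
    (j + k + l ≤ 2 * q0 s - 2 → mval s j k l = (j : ℤ) + k + l + 2) := by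
  have hq2 : (2 : ℕ) ≤ q0 s := by
    have : 2 ^ 1 ≤ 2 ^ s := Nat.pow_le_pow_right (by norm_num) hs
    simpa [q0] using this
  set Q : ℚ := (q0 s : ℚ) with hQ
  have hQ2 : (2 : ℚ) ≤ Q := by rw [hQ]; exact_mod_cast hq2
  have hQ1 : (0 : ℚ) < Q - 1 := by linarith
  have hqS : (qS s : ℚ) = 2 * Q ^ 2 := by rw [hQ]; unfold qS; push_cast; ring
  have hN : Q ≤ (j : ℚ) + k + l := by
    rw [hQ]; exact_mod_cast h₁
  have hKL : (k : ℚ) + l ≤ Q := by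
    rw [hQ]
    have : k + l ≤ q0 s := by omega
    exact_mod_cast this
  have hKL0 : (0 : ℚ) ≤ (k : ℚ) + l := by positivity
  have hNle : (j : ℚ) + k + l ≤ 2 * Q - 1 := by
    rw [hQ]
    have h3 : j + k + l + 1 ≤ 2 * q0 s := by omega
    have h4 : ((j + k + l + 1 : ℕ) : ℚ) ≤ ((2 * q0 s : ℕ) : ℚ) := by exact_mod_cast h3
    push_cast at h4; linarith
  set t : ℚ := ((k : ℚ) + l) / (qS s : ℚ) with ht
  have hQpos : (0 : ℚ) < Q := by linarith
  have hQ2pos : (0 : ℚ) < 2 * Q ^ 2 := by positivity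
  have ht0 : (0 : ℚ) ≤ t := by rw [ht]; positivity
  have hQt : Q * t ≤ 1 / 2 := by
    rw [ht, hqS, mul_comm, div_mul_eq_mul_div, div_le_iff₀ hQ2pos]
    nlinarith
  have hmv : mval s j k l = ⌈(Q / (Q - 1)) * ((j : ℚ) + k + l - t)⌉ := rfl
  have hlb : (j : ℤ) + k + l + 2 ≤ mval s j k l := by
    rw [hmv]
    have hlt : ((j : ℤ) + k + l + 1 : ℤ) < ⌈(Q / (Q - 1)) * ((j : ℚ) + k + l - t)⌉ := by
      rw [Int.lt_ceil, div_mul_eq_mul_div, lt_div_iff₀ hQ1]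
      push_cast
      nlinarith
    omega
  have hub : mval s j k l ≤ (j : ℤ) + k + l + 3 := by
    rw [hmv, Int.ceil_le, div_mul_eq_mul_div, div_le_iff₀ hQ1]
    push_cast
    nlinarith
  refine ⟨⟨hlb, hub⟩, fun h2 => ?_⟩
  have hNle2 : (j : ℚ) + k + l ≤ 2 * Q - 2 := by
    rw [hQ]
    have h3 : j + k + l + 2 ≤ 2 * q0 s := by omega
    have h4 : ((j + k + l + 2 : ℕ) : ℚ) ≤ ((2 * q0 s : ℕ) : ℚ) := by exact_mod_cast h3
    push_cast at h4; linarith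
  have hub2 : mval s j k l ≤ (j : ℤ) + k + l + 2 := by
    rw [hmv, Int.ceil_le, div_mul_eq_mul_div, div_le_iff₀ hQ1]
    push_cast
    nlinarith
  omega
end
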